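/- Let ν > 0, let t_ν(μ) = c_ν (1 + μ²/ν)^{−(ν+1)/2} be the density of the Student's t distribution with ν degrees of freedom, where c_ν = Γ((ν+1)/2)/(√(νπ) Γ(ν/2)), and let T_ν(μ) = ∫_{−∞}^μ t_ν(x) dx be its cumulative distribution function. Then for every μ ∈ ℝ, t_ν(μ)/T_ν(μ) ≤ √ν. In particular, the Student's t_ν link satisfies Condition L with constant 𝒦 = √ν. -/

import Mathlib

open MeasureTheory
open Set Filter Real Topology

lemma aux_fubini (s : ℝ) (hs : 1/2 < s) :
    Integrable (fun y : ℝ => (1 + y^2) ^ (-s)) ∧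
    Real.Gamma s * ∫ y : ℝ, (1 + y^2) ^ (-s) = Real.sqrt π * Real.Gamma (s - 1/2) := by
  have hs0 : 0 < s := by linarith
  set μ0 : Measure ℝ := volume.restrict (Ioi (0:ℝ)) with hμ0
  set F : ℝ → ℝ → ℝ := fun u y => u ^ (s-1) * Real.exp (-((1 + y^2) * u)) with hF
  have hFm : AEStronglyMeasurable (Function.uncurry F) (μ0.prod volume) := by
    apply Measurable.aestronglyMeasurable; fun_prop
  have hsplit : ∀ u : ℝ, F u = fun y => (u ^ (s-1) * Real.exp (-u)) * Real.exp (-u * y^2) := by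
    intro u; funext y; rw [hF]; simp only
    rw [mul_assoc, ← Real.exp_add]; ring_nf
  have hsect : ∀ᵐ u ∂μ0, Integrable (F u) := by
    rw [hμ0, ae_restrict_iff' measurableSet_Ioi]
    filter_upwards with u hu
    rw [hsplit u]
    exact (integrable_exp_neg_mul_sq hu).const_mul _
  have hinner : ∀ u ∈ Ioi (0:ℝ),
      ∫ y : ℝ, F u y = Real.sqrt π * (Real.exp (-u) * u ^ (s - 1/2 - 1)) := by
    intro u hu
    have hu0 : (0:ℝ) < u := hu
    rw [hsplit u, MeasureTheory.integral_const_mul, integral_gaussian]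
    have h2 : u ^ (s-1) / u ^ ((1:ℝ)/2) = u ^ (s - 1/2 - 1) := by
      rw [← Real.rpow_sub hu0]; congr 1; ring
    rw [Real.sqrt_div pi_pos.le, Real.sqrt_eq_rpow π, Real.sqrt_eq_rpow u, ← h2]; ring
  have hGint : IntegrableOn (fun u : ℝ => Real.sqrt π * (Real.exp (-u) * u ^ (s - 1/2 - 1)))
      (Ioi (0:ℝ)) :=
    (Real.GammaIntegral_convergent (by linarith : (0:ℝ) < s - 1/2)).const_mul _
  have hnormint : Integrable (fun u => ∫ y, ‖F u y‖) μ0 := by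
    apply hGint.congr
    rw [EventuallyEq, ae_restrict_iff' measurableSet_Ioi]
    filter_upwards with u hu'
    have hn : (fun y => ‖F u y‖) = F u := by
      funext y; rw [Real.norm_eq_abs, abs_of_nonneg]
      exact mul_nonneg (Real.rpow_nonneg (le_of_lt hu') _) (Real.exp_pos _).le
    rw [hn, hinner u hu']
  have hIntF : Integrable (Function.uncurry F) (μ0.prod volume) :=
    (integrable_prod_iff hFm).2 ⟨hsect, hnormint⟩
  have hswap := integral_integral_swap hIntF
  have hL : ∫ u, (∫ y, F u y) ∂μ0 = Real.sqrt π * Real.Gamma (s - 1/2) := by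
    rw [hμ0, setIntegral_congr_fun measurableSet_Ioi (fun u hu => hinner u hu),
      MeasureTheory.integral_const_mul]
    congr 1
    rw [Real.Gamma_eq_integral (by linarith : (0:ℝ) < s - 1/2)]
  have hR : ∀ y : ℝ, (∫ u, F u y ∂μ0) = Real.Gamma s * (1 + y^2) ^ (-s) := by
    intro y
    have hy : (0:ℝ) < 1 + y^2 := by positivity
    have h3 : (∫ u, F u y ∂μ0) = (1 / (1+y^2)) ^ s * Real.Gamma s := by
      rw [hμ0]
      exact Real.integral_rpow_mul_exp_neg_mul_Ioi hs0 hy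
    rw [h3, one_div, Real.inv_rpow hy.le, ← Real.rpow_neg hy.le]
    ring
  have hRe : (fun y : ℝ => ∫ u, F u y ∂μ0) = fun y : ℝ => Real.Gamma s * (1 + y^2) ^ (-s) :=
    funext hR
  have hInt2 : Integrable (fun y : ℝ => Real.Gamma s * (1 + y^2) ^ (-s)) := by
    have h := hIntF.integral_prod_right
    simp only [Function.uncurry] at h
    rwa [hRe] at h
  have hInt1 : Integrable (fun y : ℝ => (1 + y^2) ^ (-s)) := by
    have h := hInt2.const_mul (Real.Gamma s)⁻¹
    have e : (fun y : ℝ => (Real.Gamma s)⁻¹ * (Real.Gamma s * (1 + y^2) ^ (-s)))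
        = fun y : ℝ => (1 + y^2) ^ (-s) :=
      funext fun y => inv_mul_cancel_left₀ (Real.Gamma_pos_of_pos hs0).ne' _
    rwa [e] at h
  refine ⟨hInt1, ?_⟩
  rw [← MeasureTheory.integral_const_mul, ← hRe, ← hswap]
  exact hL

lemma aux_norm(ν : ℝ) (hν : 0 < ν) (c : ℝ)
    (hc : c = Real.Gamma ((ν + 1) / 2) / (Real.sqrt (ν * Real.pi) * Real.Gamma (ν / 2))) :
    Integrable (fun x : ℝ => c * (1 + x^2/ν) ^ (-((ν+1)/2))) ∧
    ∫ x : ℝ, c * (1 + x^2/ν) ^ (-((ν+1)/2)) = 1 := by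
  obtain ⟨hint, heq⟩ := aux_fubini ((ν+1)/2) (by linarith)
  have hsν : (0:ℝ) < Real.sqrt ν := Real.sqrt_pos.2 hν
  have hΓ1 : (0:ℝ) < Real.Gamma ((ν+1)/2) := Real.Gamma_pos_of_pos (by linarith)
  have hΓ2 : (0:ℝ) < Real.Gamma (ν/2) := Real.Gamma_pos_of_pos (by linarith)
  have hcomp : (fun x : ℝ => (1 + (x / Real.sqrt ν)^2) ^ (-((ν+1)/2)))
      = fun x : ℝ => (1 + x^2/ν) ^ (-((ν+1)/2)) := by
    funext x
    rw [div_pow, Real.sq_sqrt hν.le]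
  have hint2 : Integrable (fun x : ℝ => (1 + x^2/ν) ^ (-((ν+1)/2))) := by
    have h := hint.comp_div hsν.ne'
    rwa [hcomp] at h
  have hval : ∫ x : ℝ, (1 + x^2/ν) ^ (-((ν+1)/2))
      = Real.sqrt ν * ∫ y : ℝ, (1 + y^2) ^ (-((ν+1)/2)) := by
    rw [← hcomp, MeasureTheory.Measure.integral_comp_div
      (fun y : ℝ => (1 + y^2) ^ (-((ν+1)/2))) (Real.sqrt ν), abs_of_pos hsν, smul_eq_mul]
  refine ⟨hint2.const_mul c, ?_⟩
  rw [MeasureTheory.integral_const_mul, hval]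
  have h2 : (ν+1)/2 - 1/2 = ν/2 := by ring
  rw [h2] at heq
  have hIg : ∫ y : ℝ, (1 + y^2) ^ (-((ν+1)/2))
      = Real.sqrt π * Real.Gamma (ν/2) / Real.Gamma ((ν+1)/2) := by
    field_simp at heq ⊢
    linarith [heq]
  rw [hIg, hc, Real.sqrt_mul hν.le]
  field_simp

/-- **The Student's t link satisfies Condition L with 𝒦 = √ν.**
With `t_ν(μ) = c_ν (1 + μ²/ν)^{-(ν+1)/2}` (where `c_ν = Γ((ν+1)/2)/(√(νπ) Γ(ν/2))`) the
Student-t density and `T_ν` its cdf, we have `t_ν(μ)/T_ν(μ) ≤ √ν` for all `μ`; moreover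
`T_ν` is strictly increasing with `0 < T_ν < 1` and derivative `t_ν`. -/
theorem stmt14 (ν : ℝ) (hν : 0 < ν) (c : ℝ)
    (hc : c = Real.Gamma ((ν + 1) / 2) / (Real.sqrt (ν * Real.pi) * Real.Gamma (ν / 2)))
    (t T : ℝ → ℝ)
    (ht : t = fun μ => c * (1 + μ ^ 2 / ν) ^ (-((ν + 1) / 2)))
    (hT : T = fun μ => ∫ x in Set.Iic μ, t x) :
    (∀ μ, t μ / T μ ≤ Real.sqrt ν) ∧
    StrictMono T ∧ (∀ μ, 0 < T μ ∧ T μ < 1) ∧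
    ∀ μ, HasDerivAt T (t μ) μ := by
  obtain ⟨tint0, tnorm0⟩ := aux_norm ν hν c hc
  have htx : ∀ x : ℝ, t x = c * (1 + x^2/ν) ^ (-((ν+1)/2)) := fun x => by rw [ht]
  have hTx : ∀ x : ℝ, T x = ∫ u in Set.Iic x, t u := fun x => by rw [hT]
  have tint' : Integrable t := by rw [ht]; exact tint0
  have tnorm' : ∫ x : ℝ, t x = 1 := by rw [ht]; exact tnorm0
  have hπ := Real.pi_pos
  have hsν : (0:ℝ) < Real.sqrt ν := Real.sqrt_pos.2 hν
  have hΓ1 : (0:ℝ) < Real.Gamma ((ν+1)/2) := Real.Gamma_pos_of_pos (by linarith)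
  have hΓ2 : (0:ℝ) < Real.Gamma (ν/2) := Real.Gamma_pos_of_pos (by linarith)
  have hc0 : 0 < c := by
    rw [hc]; exact div_pos hΓ1 (mul_pos (Real.sqrt_pos.2 (mul_pos hν hπ)) hΓ2)
  have hP : ∀ x : ℝ, (0:ℝ) < 1 + x^2/ν := fun x => by positivity
  have hP1 : ∀ x : ℝ, (1:ℝ) ≤ 1 + x^2/ν := fun x =>
    le_add_of_nonneg_right (by positivity)
  have tpos : ∀ x : ℝ, 0 < t x := fun x => by
    rw [htx x]; exact mul_pos hc0 (Real.rpow_pos_of_pos (hP x) _)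
  have tcont : Continuous t := by
    rw [ht]
    exact continuous_const.mul
      ((continuous_const.add ((continuous_pow 2).div_const ν)).rpow_const
        (fun x => Or.inl (hP x).ne'))
  -- derivative of T
  have Tderiv : ∀ μ : ℝ, HasDerivAt T (t μ) μ := by
    intro μ
    have hTeq : ∀ x : ℝ, T x = T 0 + ∫ u in (0:ℝ)..x, t u := by
      intro x
      have h := intervalIntegral.integral_Iic_sub_Iic (tint'.integrableOn)
        (tint'.integrableOn) (f := t) (μ := volume) (a := 0) (b := x)
      rw [hTx x, hTx 0]
      linarith
    have hD : HasDerivAt (fun x : ℝ => T 0 + ∫ u in (0:ℝ)..x, t u) (t μ) μ :=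
      (intervalIntegral.integral_hasDerivAt_right (tcont.intervalIntegrable _ _)
        (tcont.stronglyMeasurableAtFilter _ _) tcont.continuousAt).const_add _
    exact hD.congr_of_eventuallyEq (Filter.Eventually.of_forall hTeq)
  -- strict monotonicity
  have Tmono : StrictMono T := by
    intro a b hab
    have h := intervalIntegral.integral_Iic_sub_Iic (tint'.integrableOn)
      (tint'.integrableOn) (f := t) (μ := volume) (a := a) (b := b)
    have h2 := intervalIntegral.intervalIntegral_pos_of_pos
      (tcont.intervalIntegrable a b) tpos hab
    rw [hTx a, hTx b] at *
    linarith
  -- positivity of T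
  have Tpos : ∀ μ : ℝ, 0 < T μ := by
    intro μ
    have h := intervalIntegral.integral_Iic_sub_Iic (tint'.integrableOn)
      (tint'.integrableOn) (f := t) (μ := volume) (a := μ - 1) (b := μ)
    have h2 := intervalIntegral.intervalIntegral_pos_of_pos
      (tcont.intervalIntegrable (μ-1) μ) tpos (by linarith)
    have h3 : 0 ≤ ∫ x in Set.Iic (μ-1), t x :=
      setIntegral_nonneg measurableSet_Iic fun x _ => (tpos x).le
    rw [hTx μ]
    linarith
  -- T < 1
  have Tlt1 : ∀ μ : ℝ, T μ < 1 := by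
    intro μ
    have h := intervalIntegral.integral_Iic_add_Ioi (b := μ) (tint'.integrableOn)
      (tint'.integrableOn)
    have h2 : 0 < ∫ x in Set.Ioc μ (μ+1), t x := by
      have h4 := intervalIntegral.intervalIntegral_pos_of_pos
        (tcont.intervalIntegrable μ (μ+1)) tpos (by linarith)
      rwa [intervalIntegral.integral_of_le (by linarith)] at h4
    have h3 : (∫ x in Set.Ioc μ (μ+1), t x) ≤ ∫ x in Set.Ioi μ, t x :=
      setIntegral_mono_set tint'.integrableOn
        (Filter.Eventually.of_forall fun x => (tpos x).le)
        (HasSubset.Subset.eventuallyLE Set.Ioc_subset_Ioi_self)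
    rw [tnorm'] at h
    rw [hTx μ]
    linarith
  -- derivative of t
  have tDeriv : ∀ x : ℝ, HasDerivAt t (t x * (-(ν+1) * x / (ν + x^2))) x := by
    intro x
    have h1 : HasDerivAt (fun y : ℝ => 1 + y^2/ν) (2*x/ν) x := by
      have h0 := ((hasDerivAt_pow 2 x).div_const ν).const_add 1
      refine h0.congr_deriv ?_
      norm_num
    have h2 := h1.rpow_const (p := -((ν+1)/2)) (Or.inl (hP x).ne')
    have h3 := h2.const_mul c
    have hgoal : c * (2*x/ν * -((ν+1)/2) * (1 + x^2/ν) ^ (-((ν+1)/2) - 1))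
        = t x * (-(ν+1) * x / (ν + x^2)) := by
      rw [htx x, show -((ν+1)/2) - 1 = -((ν+1)/2) + (-1) by ring,
        Real.rpow_add (hP x), Real.rpow_neg_one]
      have h0 : (1:ℝ) + x^2/ν ≠ 0 := (hP x).ne'
      have h0' : ν + x^2 ≠ 0 := by positivity
      field_simp
    rw [ht] at hgoal ⊢
    rw [← hgoal]
    exact h3
  -- limit of t at -infinity
  have tlim : Tendsto t atBot (𝓝 0) := by
    have hx2 : Tendsto (fun x : ℝ => x^2) atBot atTop := by
      apply tendsto_atTop_mono' atBot ?_ tendsto_neg_atBot_atTop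
      filter_upwards [Filter.eventually_le_atBot (-1 : ℝ)] with x hx
      nlinarith
    have hP2 : Tendsto (fun x : ℝ => 1 + x^2/ν) atBot atTop :=
      tendsto_atTop_add_const_left _ 1 (hx2.atTop_div_const hν)
    have h0 : Tendsto (fun x : ℝ => (1 + x^2/ν) ^ (-((ν+1)/2))) atBot (𝓝 0) :=
      (tendsto_rpow_neg_atTop (by linarith)).comp hP2
    rw [ht]
    simpa using h0.const_mul c
  -- THE KEY BOUND
  have key : ∀ μ : ℝ, t μ ≤ Real.sqrt ν * T μ := by
    rcases le_total ν 1 with hν1 | hν1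
    · -- case ν ≤ 1 : comparison with arctan antiderivative
      intro μ
      set q : ℝ → ℝ := fun x => Real.arctan (x / Real.sqrt ν) + π/2 with hqdef
      have hq0 : ∀ x : ℝ, 0 < q x := by
        intro x
        have := Real.neg_pi_div_two_lt_arctan (x / Real.sqrt ν)
        rw [hqdef]; simp only; linarith
      have hsq : ∀ x : ℝ, 1 + (x / Real.sqrt ν)^2 = 1 + x^2/ν := by
        intro x; rw [div_pow, Real.sq_sqrt hν.le]
      have hsin : ∀ x : ℝ, (1 + x^2/ν) ^ (-(1/2) : ℝ) ≤ q x := by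
        intro x
        have h2 : Real.sin (q x) = Real.cos (Real.arctan (x/Real.sqrt ν)) := by
          rw [hqdef]; simp only [Real.sin_add_pi_div_two]
        have h3 : Real.sin (q x) ≤ q x := Real.sin_le (hq0 x).le
        have h4 : (1 + x^2/ν) ^ (-(1/2):ℝ) = 1 / Real.sqrt (1 + (x/Real.sqrt ν)^2) := by
          rw [hsq, Real.sqrt_eq_rpow, Real.rpow_neg (hP x).le]
          exact (one_div _).symm
        rw [h4, ← Real.cos_arctan, ← h2]
        exact h3
      have hA : ∀ x : ℝ, HasDerivAt (fun y : ℝ => (c / Real.sqrt ν) * q y ^ ν)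
          ((c / Real.sqrt ν) * ((1/(1+(x/Real.sqrt ν)^2) * (1/Real.sqrt ν)) * ν
            * q x ^ (ν-1))) x := by
        intro x
        have h1 : HasDerivAt (fun y : ℝ => y / Real.sqrt ν) (1/Real.sqrt ν) x := by
          simpa using (hasDerivAt_id x).div_const (Real.sqrt ν)
        have h2 : HasDerivAt (fun y : ℝ => Real.arctan (y / Real.sqrt ν))
            (1/(1+(x/Real.sqrt ν)^2) * (1/Real.sqrt ν)) x :=
          (Real.hasDerivAt_arctan (x/Real.sqrt ν)).comp (h := fun y : ℝ => y / Real.sqrt ν) x h1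
        have h3 := (h2.add_const (π/2)).rpow_const (p := ν) (Or.inl (hq0 x).ne')
        exact h3.const_mul _
      have hAρ_eq : ∀ x : ℝ,
          (c / Real.sqrt ν) * ((1/(1+(x/Real.sqrt ν)^2) * (1/Real.sqrt ν)) * ν
            * q x ^ (ν-1))
          = c * q x ^ (ν-1) * (1 + x^2/ν)⁻¹ := by
        intro x
        rw [hsq x]
        have h5 : (c / Real.sqrt ν) * ((1/(1+x^2/ν) * (1/Real.sqrt ν)) * ν * q x ^ (ν-1))
            = c * q x ^ (ν-1) * (1+x^2/ν)⁻¹ * (ν / (Real.sqrt ν * Real.sqrt ν)) := by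
          ring
        rw [h5, Real.mul_self_sqrt hν.le, div_self hν.ne', mul_one]
      have hAρ_le_t : ∀ x : ℝ, c * q x ^ (ν-1) * (1 + x^2/ν)⁻¹ ≤ t x := by
        intro x
        have h6 : q x ^ (ν-1) ≤ ((1 + x^2/ν) ^ (-(1/2):ℝ)) ^ (ν-1) :=
          Real.rpow_le_rpow_of_nonpos (Real.rpow_pos_of_pos (hP x) _) (hsin x)
            (by linarith)
        have h7 : ((1 + x^2/ν) ^ (-(1/2):ℝ)) ^ (ν-1)
            = (1 + x^2/ν) ^ ((-(1/2)) * (ν-1)) :=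
          (Real.rpow_mul (hP x).le _ _).symm
        have h8 : t x = c * (1 + x^2/ν) ^ ((-(1/2))*(ν-1)) * (1 + x^2/ν)⁻¹ := by
          rw [htx x, ← Real.rpow_neg_one (1 + x^2/ν), mul_assoc, ← Real.rpow_add (hP x)]
          congr 1
          ring
        rw [h8]
        apply mul_le_mul_of_nonneg_right _ (inv_nonneg.2 (hP x).le)
        exact mul_le_mul_of_nonneg_left (h6.trans_eq h7) hc0.le
      have hAρ_nonneg : ∀ x : ℝ, 0 ≤ c * q x ^ (ν-1) * (1 + x^2/ν)⁻¹ := fun x =>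
        le_of_lt (mul_pos (mul_pos hc0 (Real.rpow_pos_of_pos (hq0 x) _))
          (inv_pos.2 (hP x)))
      have hqcont : Continuous q :=
        (Real.continuous_arctan.comp (continuous_id.div_const _)).add continuous_const
      have hAρcont : Continuous fun x : ℝ => c * q x ^ (ν-1) * (1 + x^2/ν)⁻¹ :=
        (continuous_const.mul (hqcont.rpow_const fun x => Or.inl (hq0 x).ne')).mul
          ((continuous_const.add ((continuous_pow 2).div_const ν)).inv₀
            fun x => (hP x).ne')
      have hAρint : IntegrableOn (fun x : ℝ => c * q x ^ (ν-1) * (1 + x^2/ν)⁻¹)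
          (Set.Iic μ) := by
        refine Integrable.mono' tint'.integrableOn
          hAρcont.aestronglyMeasurable.restrict ?_
        filter_upwards with x
        rw [Real.norm_eq_abs, abs_of_nonneg (hAρ_nonneg x)]
        exact hAρ_le_t x
      have hAlim : Tendsto (fun x : ℝ => (c/Real.sqrt ν) * q x ^ ν) atBot (𝓝 0) := by
        have harc : Tendsto (fun x : ℝ => Real.arctan (x / Real.sqrt ν)) atBot
            (𝓝 (-(π/2))) :=
          (Real.tendsto_arctan_atBot.mono_right nhdsWithin_le_nhds).comp
            (Tendsto.atBot_div_const hsν tendsto_id)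
        have hq_lim : Tendsto q atBot (𝓝 0) := by
          have h9 := harc.add_const (π/2)
          rw [hqdef]
          simpa using h9
        have hq_pow : Tendsto (fun x : ℝ => q x ^ ν) atBot (𝓝 0) := by
          have hcont0 : ContinuousAt (fun z : ℝ => z ^ ν) 0 :=
            Real.continuousAt_rpow_const 0 ν (Or.inr hν.le)
          have h10 := hcont0.tendsto.comp hq_lim
          rwa [Real.zero_rpow hν.ne'] at h10
        simpa using hq_pow.const_mul (c/Real.sqrt ν)
      have hAeq : ∫ x in Set.Iic μ, c * q x ^ (ν-1) * (1 + x^2/ν)⁻¹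
          = (c/Real.sqrt ν) * q μ ^ ν - 0 :=
        MeasureTheory.integral_Iic_of_hasDerivAt_of_tendsto'
          (fun x _ => hAρ_eq x ▸ hA x) hAρint hAlim
      have hfinal1 : t μ ≤ Real.sqrt ν * ((c/Real.sqrt ν) * q μ ^ ν) := by
        have h12 : Real.sqrt ν * ((c/Real.sqrt ν) * q μ ^ ν) = c * q μ ^ ν := by
          field_simp
        rw [h12, htx μ]
        have h13 : (1 + μ^2/ν) ^ (-((ν+1)/2)) ≤ (1 + μ^2/ν) ^ (-(ν/2)) :=
          Real.rpow_le_rpow_of_exponent_le (hP1 μ) (by linarith)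
        have h14 : (1 + μ^2/ν) ^ (-(ν/2) : ℝ) = ((1 + μ^2/ν) ^ (-(1/2):ℝ)) ^ ν := by
          rw [← Real.rpow_mul (hP μ).le]; congr 1; ring
        have h15 : ((1 + μ^2/ν) ^ (-(1/2):ℝ)) ^ ν ≤ q μ ^ ν :=
          Real.rpow_le_rpow (Real.rpow_nonneg (hP μ).le _) (hsin μ) hν.le
        apply mul_le_mul_of_nonneg_left _ hc0.le
        calc (1 + μ^2/ν) ^ (-((ν+1)/2)) ≤ (1 + μ^2/ν) ^ (-(ν/2)) := h13
          _ = ((1 + μ^2/ν) ^ (-(1/2):ℝ)) ^ ν := h14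
          _ ≤ q μ ^ ν := h15
      have hfinal2 : (c/Real.sqrt ν) * q μ ^ ν ≤ T μ := by
        rw [hTx μ, ← sub_zero ((c/Real.sqrt ν) * q μ ^ ν), ← hAeq]
        exact setIntegral_mono hAρint tint'.integrableOn fun x => hAρ_le_t x
      calc t μ ≤ Real.sqrt ν * ((c/Real.sqrt ν) * q μ ^ ν) := hfinal1
        _ ≤ Real.sqrt ν * T μ := mul_le_mul_of_nonneg_left hfinal2 hsν.le
    · -- case 1 ≤ ν : √ν t - t' ≥ 0
      intro μ
      have hwbase : ∀ x : ℝ, 2 * Real.sqrt ν * |x| ≤ ν + x^2 := by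
        intro x
        nlinarith [sq_nonneg (Real.sqrt ν - |x|), Real.sq_sqrt hν.le, sq_abs x]
      have hwcont : Continuous fun x : ℝ => -(ν+1) * x / (ν + x^2) :=
        (continuous_const.mul continuous_id).div
          (continuous_const.add (continuous_pow 2))
          (fun x => (by positivity : (0:ℝ) < ν + x^2).ne')
      have hdcont : Continuous fun x : ℝ => t x * (-(ν+1) * x / (ν + x^2)) :=
        tcont.mul hwcont
      have hwbound : ∀ x : ℝ, |(-(ν+1) * x / (ν + x^2))| ≤ (ν+1)/(2*Real.sqrt ν) := by
        intro x
        rw [abs_div, abs_of_pos (by positivity : (0:ℝ) < ν + x^2), abs_mul, abs_neg,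
          abs_of_pos (by linarith : (0:ℝ) < ν+1),
          div_le_div_iff₀ (by positivity) (by positivity)]
        have := hwbase x
        nlinarith [abs_nonneg x]
      have hdint : IntegrableOn (fun x : ℝ => t x * (-(ν+1) * x / (ν + x^2)))
          (Set.Iic μ) := by
        refine Integrable.mono' ((tint'.const_mul ((ν+1)/(2*Real.sqrt ν))).integrableOn)
          hdcont.aestronglyMeasurable.restrict ?_
        filter_upwards with x
        rw [Real.norm_eq_abs, abs_mul, abs_of_pos (tpos x)]
        calc t x * |(-(ν+1) * x / (ν + x^2))| ≤ t x * ((ν+1)/(2*Real.sqrt ν)) :=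
              mul_le_mul_of_nonneg_left (hwbound x) (tpos x).le
          _ = (ν+1)/(2*Real.sqrt ν) * t x := mul_comm _ _
      have hdeq : ∫ x in Set.Iic μ, t x * (-(ν+1) * x / (ν + x^2)) = t μ - 0 :=
        MeasureTheory.integral_Iic_of_hasDerivAt_of_tendsto'
          (fun x _ => tDeriv x) hdint tlim
      have hpt : ∀ x : ℝ, t x * (-(ν+1) * x / (ν + x^2)) ≤ Real.sqrt ν * t x := by
        intro x
        have hwx : -(ν+1) * x / (ν + x^2) ≤ Real.sqrt ν := by
          rw [div_le_iff₀ (by positivity : (0:ℝ) < ν + x^2)]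
          rcases le_total x 0 with hx | hx
          · nlinarith [sq_nonneg (Real.sqrt ν + x), Real.sq_sqrt hν.le, hsν]
          · nlinarith [Real.sq_sqrt hν.le, hsν, sq_nonneg x,
              mul_nonneg hsν.le (sq_nonneg x)]
        calc t x * (-(ν+1) * x / (ν + x^2)) ≤ t x * Real.sqrt ν :=
              mul_le_mul_of_nonneg_left hwx (tpos x).le
          _ = Real.sqrt ν * t x := mul_comm _ _
      have h1 : 0 ≤ ∫ x in Set.Iic μ,
          (Real.sqrt ν * t x - t x * (-(ν+1) * x / (ν + x^2))) :=
        setIntegral_nonneg measurableSet_Iic fun x _ => by linarith [hpt x]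
      rw [integral_sub ((tint'.const_mul _).integrableOn) hdint,
        MeasureTheory.integral_const_mul, hdeq] at h1
      rw [hTx μ]
      linarith
  refine ⟨fun μ => ?_, Tmono, fun μ => ⟨Tpos μ, Tlt1 μ⟩, Tderiv⟩
  rw [div_le_iff₀ (Tpos μ)]
  calc t μ ≤ Real.sqrt ν * T μ := key μ
    _ = Real.sqrt ν * T μ := rfl
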